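/- Let F be a finite field and G a finite abelian group, and suppose u, v ∈ FG satisfy FG·u = Ann(v) and FG·v = Ann(u). Then the dual code of FG·u (with respect to the Euclidean inner product on coefficient vectors) equals FG·v^{(-1)}, where v^{(-1)} = Σ_g v_{g^{-1}} g. -/

import Mathlib

/-- The annihilator of a single element of the group algebra. -/
def ann {F G : Type*} [Field F] [CommGroup G] (v : MonoidAlgebra F G) :
    Ideal (MonoidAlgebra F G) where
  carrier := {x | x * v = 0}
  add_mem' := by
    intro a b ha hb
    simp only [Set.mem_setOf_eq, add_mul] at *
    rw [ha, hb, add_zero]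
  zero_mem' := by simp
  smul_mem' := by
    intro c x hx
    simp only [Set.mem_setOf_eq, smul_eq_mul] at *
    rw [mul_assoc, hx, mul_zero]

/-- `v^{(-1)} = Σ_g v_{g⁻¹} g`. -/
def inv' {F G : Type*} [Field F] [CommGroup G] (v : MonoidAlgebra F G) :
    MonoidAlgebra F G :=
  MonoidAlgebra.ofCoeff (Finsupp.equivMapDomain (Equiv.inv G) v.coeff)

section aux
variable {F G : Type*} [Field F] [CommGroup G]

lemma inv'_apply (x : MonoidAlgebra F G) (g : G) : (inv' x).coeff g = x.coeff g⁻¹ := rfl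

lemma inv'_inv' (x : MonoidAlgebra F G) : inv' (inv' x) = x := by
  ext g; simp [inv'_apply]

lemma inv'_eq_domCongr (x : MonoidAlgebra F G) :
    inv' x = MonoidAlgebra.domCongr F F (MulEquiv.inv G) x := by
  ext g
  simp [inv'_apply, MonoidAlgebra.coeff_domCongr]

lemma inv'_mul (x y : MonoidAlgebra F G) : inv' (x * y) = inv' x * inv' y := by
  simp only [inv'_eq_domCongr, map_mul]

lemma inv'_zero : inv' (0 : MonoidAlgebra F G) = 0 := by
  simp only [inv'_eq_domCongr, map_zero]

lemma form_eq [Fintype G] (a c : MonoidAlgebra F G) :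
    ∑ g : G, a.coeff g * c.coeff g = (a * inv' c).coeff (1 : G) := by
  classical
  rw [MonoidAlgebra.coeff_mul]
  have key : ∀ (p : G) (f : F), ((inv' c).coeff.sum fun q g => if p * q = 1 then f * g else 0)
      = f * c.coeff p := by
    intro p f
    have h1 : ((inv' c).coeff.sum fun q g => if p * q = 1 then f * g else 0)
        = (inv' c).coeff.sum fun q g => if q = p⁻¹ then f * g else 0 := by
      apply Finsupp.sum_congr
      intro q _
      congr 1
      simp [eq_comm, eq_inv_iff_mul_eq_one, mul_comm]
    rw [h1, Finsupp.sum_ite_eq' (inv' c).coeff p⁻¹ (fun _ g => f * g)]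
    by_cases hm : p⁻¹ ∈ (inv' c).coeff.support
    · simp [hm, inv'_apply]
    · simp only [hm, if_false]
      rw [Finsupp.notMem_support_iff] at hm
      rw [inv'_apply, inv_inv] at hm
      rw [hm, mul_zero]
  have step : (Finsupp.sum a.coeff fun p f => Finsupp.sum (inv' c).coeff fun q g =>
      if p * q = 1 then f * g else 0) = Finsupp.sum a.coeff fun p f => f * c.coeff p :=
    Finsupp.sum_congr (fun p _ => key p (a.coeff p))
  rw [step]
  rw [Finsupp.sum]
  rw [Finset.sum_subset (Finset.subset_univ a.coeff.support)]
  intro g _ hg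
  rw [Finsupp.notMem_support_iff] at hg
  rw [hg, zero_mul]

lemma eq_zero_of_forall (x : MonoidAlgebra F G)
    (h : ∀ s : MonoidAlgebra F G, (x * s).coeff (1 : G) = 0) : x = 0 := by
  ext g
  have := h (MonoidAlgebra.single g⁻¹ 1)
  rwa [MonoidAlgebra.coeff_mul_single_apply, mul_one, one_mul, inv_inv] at this

end aux

theorem stmt_4 (F G : Type*) [Field F] [Fintype F] [CommGroup G] [Fintype G]
    (u v : MonoidAlgebra F G)
    (hu : (Ideal.span {u} : Ideal (MonoidAlgebra F G)) = ann v)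
    (hv : (Ideal.span {v} : Ideal (MonoidAlgebra F G)) = ann u) :
    {a : MonoidAlgebra F G |
        ∀ c ∈ (Ideal.span {u} : Ideal (MonoidAlgebra F G)), ∑ g : G, a.coeff g * c.coeff g = 0}
      = ((Ideal.span {inv' v} : Ideal (MonoidAlgebra F G)) : Set (MonoidAlgebra F G)) := by
  have hvu : v * u = 0 := by
    have : v ∈ (Ideal.span {v} : Ideal (MonoidAlgebra F G)) :=
      Ideal.subset_span (Set.mem_singleton v)
    rw [hv] at this
    exact this
  ext a
  simp only [Set.mem_setOf_eq, SetLike.mem_coe]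
  constructor
  · intro h
    have hz : a * inv' u = 0 := by
      apply eq_zero_of_forall
      intro s
      have hmem : u * inv' s ∈ (Ideal.span {u} : Ideal (MonoidAlgebra F G)) :=
        Ideal.mem_span_singleton.2 ⟨inv' s, rfl⟩
      have := h (u * inv' s) hmem
      rw [form_eq, inv'_mul, inv'_inv'] at this
      rw [mul_assoc]
      exact this
    have h2 : inv' a * u = 0 := by
      have := congrArg inv' hz
      rwa [inv'_mul, inv'_inv', inv'_zero] at this
    have h3 : inv' a ∈ (Ideal.span {v} : Ideal (MonoidAlgebra F G)) := by
      rw [hv]; exact h2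
    obtain ⟨c, hc⟩ := Ideal.mem_span_singleton.1 h3
    apply Ideal.mem_span_singleton.2
    refine ⟨inv' c, ?_⟩
    have := congrArg inv' hc
    rwa [inv'_inv', inv'_mul] at this
  · intro ha c hc
    obtain ⟨d, rfl⟩ := Ideal.mem_span_singleton.1 ha
    obtain ⟨e, rfl⟩ := Ideal.mem_span_singleton.1 hc
    rw [form_eq, inv'_mul]
    have : inv' v * d * (inv' u * inv' e) = inv' (v * u) * (d * inv' e) := by
      rw [inv'_mul]; ring
    rw [this, hvu, inv'_zero, zero_mul]
    rfl
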